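/- Let N ≥ 2 and let X ∈ M_N(ℝ) be a symmetric matrix with eigenvalues λ_N ≤ λ_{N−1} ≤ … ≤ λ₁ (listed with multiplicity). Then Tr(X·A²) ≤ 0 holds for every antisymmetric real matrix A ∈ M_N(ℝ) (Aᵗ = −A) if and only if the sum of the two smallest eigenvalues is nonnegative: λ_N + λ_{N−1} ≥ 0. -/

import Mathlib

open scoped Matrix

lemma key_trace {N : ℕ} (d : Fin N → ℝ) (B : Matrix (Fin N) (Fin N) ℝ) :
    Matrix.trace (Matrix.diagonal d * (B * B)) = ∑ i, ∑ j, d i * (B i j * B j i) := by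
  simp [Matrix.trace, Matrix.diag, Matrix.mul_apply, Matrix.diagonal_apply, Finset.mul_sum, ite_mul]

lemma diag_neg {N : ℕ} (d : Fin N → ℝ) (B : Matrix (Fin N) (Fin N) ℝ)
    (hB : Bᵀ = -B) (h : ∀ i j : Fin N, i ≠ j → 0 ≤ d i + d j) :
    Matrix.trace (Matrix.diagonal d * (B * B)) ≤ 0 := by
  have hBa : ∀ i j, B j i = - B i j := by
    intro i j
    have := congrFun (congrFun hB i) j
    simpa [Matrix.transpose_apply] using this
  have hdiag : ∀ i, B i i = 0 := by
    intro i
    have := hBa i i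
    linarith
  rw [key_trace]
  have h1 : ∑ i, ∑ j, d i * (B i j * B j i) = -∑ i, ∑ j, d i * (B i j)^2 := by
    rw [← Finset.sum_neg_distrib]
    refine Finset.sum_congr rfl fun i _ => ?_
    rw [← Finset.sum_neg_distrib]
    refine Finset.sum_congr rfl fun j _ => ?_
    rw [hBa i j]; ring
  rw [h1, neg_nonpos]
  have h2 : (2:ℝ) * ∑ i, ∑ j, d i * (B i j)^2
      = ∑ i, ∑ j, (d i + d j) * (B i j)^2 := by
    rw [two_mul]
    nth_rewrite 2 [Finset.sum_comm]
    rw [← Finset.sum_add_distrib]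
    refine Finset.sum_congr rfl fun i _ => ?_
    rw [← Finset.sum_add_distrib]
    refine Finset.sum_congr rfl fun j _ => ?_
    have : (B j i)^2 = (B i j)^2 := by rw [hBa i j]; ring
    rw [this]; ring
  have h3 : 0 ≤ ∑ i, ∑ j, (d i + d j) * (B i j)^2 := by
    refine Finset.sum_nonneg fun i _ => Finset.sum_nonneg fun j _ => ?_
    rcases eq_or_ne i j with rfl | hij
    · simp [hdiag i]
    · exact mul_nonneg (h i j hij) (sq_nonneg _)
  linarith [h2, h3]

lemma diag_std {N : ℕ} (d : Fin N → ℝ) (i j : Fin N) (hij : i ≠ j) :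
    Matrix.trace (Matrix.diagonal d *
      ((Matrix.single i j (1:ℝ) - Matrix.single j i 1) *
       (Matrix.single i j (1:ℝ) - Matrix.single j i 1))) = -(d i + d j) := by
  have hmul : (Matrix.single i j (1:ℝ) - Matrix.single j i 1) *
       (Matrix.single i j (1:ℝ) - Matrix.single j i 1)
      = -(Matrix.single i i 1 + Matrix.single j j 1) := by
    rw [sub_mul, mul_sub, mul_sub]
    rw [Matrix.single_mul_single_same, Matrix.single_mul_single_same,
      Matrix.single_mul_single_of_ne (h := hij.symm), Matrix.single_mul_single_of_ne (h := hij)]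
    ring_nf
    abel
  rw [hmul]
  rw [Matrix.mul_neg, Matrix.trace_neg, Matrix.mul_add, Matrix.trace_add, neg_inj]
  have hD : ∀ k : Fin N, Matrix.trace (Matrix.diagonal d * Matrix.single k k (1:ℝ)) = d k := by
    intro k
    simp [Matrix.trace, Matrix.diag, Matrix.diagonal_mul, Matrix.single, Matrix.of_apply]
  rw [hD, hD]

/-- For `N ≥ 2` and a real symmetric matrix `X`, one has
`Tr(X·A²) ≤ 0` for every antisymmetric real `A` iff the sum of the two smallest
eigenvalues of `X` is nonnegative, i.e. iff `λ_i + λ_j ≥ 0` for all pairs of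
distinct indices (eigenvalues listed with multiplicity). -/
theorem stmt12 (N : ℕ) (hN : 2 ≤ N) (X : Matrix (Fin N) (Fin N) ℝ)
    (hX : X.IsHermitian) :
    (∀ A : Matrix (Fin N) (Fin N) ℝ, Aᵀ = -A → Matrix.trace (X * (A * A)) ≤ 0) ↔
    (∀ i j : Fin N, i ≠ j → 0 ≤ hX.eigenvalues i + hX.eigenvalues j) := by
  set U : Matrix (Fin N) (Fin N) ℝ := (hX.eigenvectorUnitary : Matrix (Fin N) (Fin N) ℝ) with hUdef
  set d := hX.eigenvalues with hd
  have hstar : star U = Uᵀ := by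
    rw [Matrix.star_eq_conjTranspose, Matrix.conjTranspose_eq_transpose_of_trivial]
  have hU1 : Uᵀ * U = 1 := by
    rw [← hstar]; exact Matrix.mem_unitaryGroup_iff'.mp hX.eigenvectorUnitary.2
  have hU2 : U * Uᵀ = 1 := by
    rw [← hstar]; exact Matrix.mem_unitaryGroup_iff.mp hX.eigenvectorUnitary.2
  have hspec : X = U * Matrix.diagonal d * Uᵀ := by
    have h := hX.spectral_theorem
    rw [Unitary.conjStarAlgAut_apply, ← hUdef, hstar] at h
    simpa [Function.comp] using h
  have key : ∀ M : Matrix (Fin N) (Fin N) ℝ,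
      Matrix.trace (U * M * Uᵀ) = Matrix.trace M := by
    intro M
    rw [Matrix.trace_mul_cycle, hU1, Matrix.one_mul]
  constructor
  · intro h i j hij
    set B := Matrix.single i j (1:ℝ) - Matrix.single j i 1 with hBdef
    have hBt : Bᵀ = -B := by
      ext k l
      simp [hBdef, Matrix.single, and_comm]
    have hAt : (U * B * Uᵀ)ᵀ = -(U * B * Uᵀ) := by
      simp [Matrix.transpose_mul, hBt, Matrix.mul_assoc]
    have hprod : X * ((U * B * Uᵀ) * (U * B * Uᵀ))
        = U * (Matrix.diagonal d * (B * B)) * Uᵀ := by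
      rw [hspec]
      calc (U * Matrix.diagonal d * Uᵀ) * ((U * B * Uᵀ) * (U * B * Uᵀ))
          = U * Matrix.diagonal d * (Uᵀ * U) * B * (Uᵀ * U) * B * Uᵀ := by
            noncomm_ring
        _ = U * (Matrix.diagonal d * (B * B)) * Uᵀ := by
            rw [hU1]; noncomm_ring
    have h2 := h (U * B * Uᵀ) hAt
    rw [hprod, key, diag_std d i j hij] at h2
    linarith
  · intro h A hAt
    set B := Uᵀ * A * U with hBdef
    have hBt : Bᵀ = -B := by
      simp [hBdef, Matrix.transpose_mul, hAt, Matrix.mul_assoc]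
    have e2 : B * B = Uᵀ * (A * A) * U := by
      calc B * B = Uᵀ * A * (U * Uᵀ) * A * U := by rw [hBdef]; noncomm_ring
        _ = Uᵀ * (A * A) * U := by rw [hU2]; noncomm_ring
    have e3 : X * (A * A) = U * (Matrix.diagonal d * (B * B)) * Uᵀ := by
      rw [e2, hspec]
      calc U * Matrix.diagonal d * Uᵀ * (A * A)
          = U * (Matrix.diagonal d * (Uᵀ * (A * A) * (U * Uᵀ))) := by
            rw [hU2]; noncomm_ring
        _ = U * (Matrix.diagonal d * (Uᵀ * (A * A) * U)) * Uᵀ := by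
            noncomm_ring
    rw [e3, key]
    exact diag_neg d B hBt h
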